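/- For integers $1\le d\le n$, the coefficient of the monomial $h^{n-d}v^{d-1}w^{n-1}$ in the polynomial $\left(\sum_{j=0}^{n-1}(w+h)^{n-1-j}v^{j}\right)\left(\sum_{j=0}^{n-1}(v+h)^{n-1-j}w^{j}\right)$ in three commuting variables $h,v,w$ equals $2^{n-d}\binom{n}{d-1}$. -/

import Mathlib

open MvPolynomial

lemma fs3_eq (a b c a' b' c' : ℕ) :
    (Finsupp.single (0:Fin 3) a + Finsupp.single 1 b + Finsupp.single 2 c =
      Finsupp.single (0:Fin 3) a' + Finsupp.single 1 b' + Finsupp.single 2 c') ↔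
    (a = a' ∧ b = b' ∧ c = c') := by
  constructor
  · intro h
    have h0 := DFunLike.congr_fun h 0
    have h1 := DFunLike.congr_fun h 1
    have h2 := DFunLike.congr_fun h 2
    simp [Finsupp.single_apply] at h0 h1 h2
    exact ⟨h0, h1, h2⟩
  · rintro ⟨rfl, rfl, rfl⟩; rfl

lemma fs3_le (j k a b c : ℕ) :
    (Finsupp.single (1:Fin 3) j + Finsupp.single 2 k ≤
      Finsupp.single (0:Fin 3) a + Finsupp.single 1 b + Finsupp.single 2 c) ↔
    (j ≤ b ∧ k ≤ c) := by
  rw [Finsupp.le_def]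
  constructor
  · intro h
    have h1 := h 1
    have h2 := h 2
    simp [Finsupp.single_apply] at h1 h2
    exact ⟨h1, h2⟩
  · rintro ⟨hj, hk⟩ x
    fin_cases x <;> simp [Finsupp.single_apply] <;> omega

lemma fs3_sub (j k a b c : ℕ) :
    (Finsupp.single (0:Fin 3) a + Finsupp.single 1 b + Finsupp.single 2 c) -
      (Finsupp.single (1:Fin 3) j + Finsupp.single 2 k) =
    Finsupp.single (0:Fin 3) a + Finsupp.single 1 (b - j) + Finsupp.single 2 (c - k) := by
  ext x
  fin_cases x <;> simp [Finsupp.single_apply, Finsupp.tsub_apply]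

lemma coeffA (m l p q r : ℕ) :
    coeff (Finsupp.single (0:Fin 3) p + Finsupp.single 1 q + Finsupp.single 2 r)
      (((X 2 + X 0)^m * (X 1 + X 0)^l : MvPolynomial (Fin 3) ℤ)) =
    if p + q + r = m + l then ((m.choose r : ℤ) * l.choose q) else 0 := by
  have expand : ((X 2 + X 0)^m * (X 1 + X 0)^l : MvPolynomial (Fin 3) ℤ) =
      ∑ a ∈ Finset.range (m+1), ∑ b ∈ Finset.range (l+1),
        monomial (Finsupp.single (0:Fin 3) ((m-a)+(l-b)) + Finsupp.single 1 b +
          Finsupp.single 2 a) ((m.choose a : ℤ) * l.choose b) := by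
    rw [add_pow, add_pow, Finset.sum_mul_sum]
    refine Finset.sum_congr rfl fun a _ => Finset.sum_congr rfl fun b _ => ?_
    rw [X_pow_eq_monomial, X_pow_eq_monomial, X_pow_eq_monomial, X_pow_eq_monomial,
      ← C_eq_coe_nat, ← C_eq_coe_nat]
    simp only [monomial_mul, mul_one, one_mul, mul_comm, mul_left_comm, C_mul_monomial]
    congr 1
    rw [Finsupp.single_add]
    abel_nf
  rw [expand, coeff_sum]
  simp only [coeff_sum, coeff_monomial]
  have step : ∀ a ∈ Finset.range (m+1), ∀ b ∈ Finset.range (l+1),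
      (if (Finsupp.single (0:Fin 3) ((m-a)+(l-b)) + Finsupp.single 1 b + Finsupp.single 2 a)
          = (Finsupp.single (0:Fin 3) p + Finsupp.single 1 q + Finsupp.single 2 r)
        then ((m.choose a : ℤ) * l.choose b) else 0)
      = (if b = q then (if a = r then
          (if (m-a)+(l-b) = p then ((m.choose a : ℤ) * l.choose b) else 0) else 0) else 0) := by
    intro a _ b _
    simp only [fs3_eq]
    by_cases h1 : a = r <;> by_cases h2 : b = q <;> by_cases h3 : (m-a)+(l-b) = p <;>
      simp [h1, h2, h3]
  rw [Finset.sum_congr rfl (fun a ha => Finset.sum_congr rfl (step a ha))]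
  have collapse1 : ∀ a ∈ Finset.range (m+1),
      (∑ b ∈ Finset.range (l+1), if b = q then (if a = r then
        (if (m-a)+(l-b) = p then ((m.choose a:ℤ) * l.choose b) else 0) else 0) else 0)
      = if q ≤ l then (if a = r then
        (if (m-a)+(l-q) = p then ((m.choose a:ℤ) * l.choose q) else 0) else 0) else 0 := by
    intro a _
    rw [Finset.sum_ite_eq']
    simp only [Finset.mem_range, Nat.lt_succ_iff]
  rw [Finset.sum_congr rfl collapse1]
  by_cases hq : q ≤ l
  · simp only [if_pos hq]
    rw [Finset.sum_ite_eq']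
    simp only [Finset.mem_range, Nat.lt_succ_iff]
    by_cases hr : r ≤ m
    · have hiff : ((m-r)+(l-q) = p) ↔ (p+q+r = m+l) := by omega
      rw [if_pos hr, if_congr hiff rfl rfl]
    · rw [if_neg hr, Nat.choose_eq_zero_of_lt (show m < r by omega)]
      simp
  · rw [Nat.choose_eq_zero_of_lt (show l < q by omega)]
    simp [hq]

lemma sumCC (N r : ℕ) (h : r ≤ N) :
    ∑ m ∈ Finset.range (N+1), N.choose m * m.choose r = 2^(N-r) * N.choose r := by
  rw [Finset.range_eq_Ico, ← Finset.sum_Ico_consecutive _ (Nat.zero_le r) (by omega : r ≤ N+1)]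
  have first : ∑ m ∈ Finset.Ico 0 r, N.choose m * m.choose r = 0 := by
    apply Finset.sum_eq_zero
    intro m hm
    rw [Finset.mem_Ico] at hm
    rw [Nat.choose_eq_zero_of_lt hm.2, Nat.mul_zero]
  rw [first, Nat.zero_add, Finset.sum_Ico_eq_sum_range]
  have second : ∀ i ∈ Finset.range (N+1-r), N.choose (r+i) * (r+i).choose r
      = N.choose r * (N-r).choose i := by
    intro i hi
    rw [Finset.mem_range] at hi
    rw [Nat.choose_mul (by omega), show r+i-r = i by omega]
  rw [Finset.sum_congr rfl second, ← Finset.mul_sum,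
    show N+1-r = (N-r)+1 by omega, Nat.sum_range_choose, Nat.mul_comm]

lemma hockey (n d : ℕ) (hd1 : 1 ≤ d) (hdn : d ≤ n) :
    ∑ j ∈ Finset.range d, (n-1-j).choose (d-1-j) = n.choose (d-1) := by
  have step : ∀ j ∈ Finset.range d, (n-1-j).choose (d-1-j)
      = ((d-1-j)+(n-d)).choose (n-d) := by
    intro j hj
    rw [Finset.mem_range] at hj
    rw [show d-1-j+(n-d) = n-1-j by omega]
    exact Nat.choose_symm_of_eq_add (by omega)
  rw [Finset.sum_congr rfl step,
    Finset.sum_range_reflect (fun i => (i+(n-d)).choose (n-d)) d,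
    show Finset.range d = Finset.range ((d-1)+1) by rw [Nat.sub_add_cancel hd1],
    Nat.sum_range_add_choose, show d-1+(n-d)+1 = n by omega]
  exact Nat.choose_symm_of_eq_add (by omega)

lemma natsum (n d : ℕ) (hd1 : 1 ≤ d) (hdn : d ≤ n) :
    ∑ j ∈ Finset.range n, ∑ k ∈ Finset.range n,
      (if j ≤ d-1 then (n-1-j).choose (n-1-k) * (n-1-k).choose (d-1-j) else 0)
    = 2^(n-d) * n.choose (d-1) := by
  have inner : ∀ j ∈ Finset.range n, (∑ k ∈ Finset.range n,
      (if j ≤ d-1 then (n-1-j).choose (n-1-k) * (n-1-k).choose (d-1-j) else 0))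
      = if j ≤ d-1 then 2^(n-d) * (n-1-j).choose (d-1-j) else 0 := by
    intro j hj
    rw [Finset.mem_range] at hj
    by_cases hjd : j ≤ d-1
    · simp only [if_pos hjd]
      have refl1 : ∑ k ∈ Finset.range n,
          (n-1-j).choose (n-1-k) * (n-1-k).choose (d-1-j)
          = ∑ m ∈ Finset.range n, (n-1-j).choose m * m.choose (d-1-j) :=
        Finset.sum_range_reflect (fun m => (n-1-j).choose m * m.choose (d-1-j)) n
      rw [refl1]
      rw [← Finset.sum_subset (Finset.range_subset_range.2 (show (n-1-j)+1 ≤ n by omega))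
        (fun m _ hm => by
          rw [Finset.mem_range, Nat.lt_succ_iff, Nat.not_le] at hm
          rw [Nat.choose_eq_zero_of_lt hm, Nat.zero_mul])]
      rw [sumCC _ _ (by omega), show n-1-j-(d-1-j) = n-d by omega]
    · simp [hjd]
  rw [Finset.sum_congr rfl inner]
  rw [← Finset.sum_subset (Finset.range_subset_range.2 hdn)
    (fun j _ hj => by rw [Finset.mem_range, Nat.not_lt] at hj; rw [if_neg (by omega)])]
  have ondom : ∀ j ∈ Finset.range d,
      (if j ≤ d-1 then 2^(n-d) * (n-1-j).choose (d-1-j) else 0)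
      = 2^(n-d) * (n-1-j).choose (d-1-j) := by
    intro j hj
    rw [Finset.mem_range] at hj
    rw [if_pos (by omega)]
  rw [Finset.sum_congr rfl ondom, ← Finset.mul_sum, hockey n d hd1 hdn]


/-- The coefficient of `h^(n-d) v^(d-1) w^(n-1)` in
`(∑_{j<n} (w+h)^(n-1-j) v^j) * (∑_{j<n} (v+h)^(n-1-j) w^j)` equals `2^(n-d) * C(n, d-1)`.
Here `X 0 = h`, `X 1 = v`, `X 2 = w` in `ℤ[h,v,w]`. -/
theorem kalman_degree_square_matrices (n d : ℕ) (hd1 : 1 ≤ d) (hdn : d ≤ n) :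
    MvPolynomial.coeff
      (Finsupp.single (0 : Fin 3) (n - d) + Finsupp.single 1 (d - 1) + Finsupp.single 2 (n - 1))
      ((∑ j ∈ Finset.range n, (X 2 + X 0) ^ (n - 1 - j) * (X 1 : MvPolynomial (Fin 3) ℤ) ^ j) *
        (∑ j ∈ Finset.range n, (X 1 + X 0) ^ (n - 1 - j) * (X 2) ^ j))
      = 2 ^ (n - d) * (n.choose (d - 1) : ℤ) := by
  rw [Finset.sum_mul_sum, coeff_sum]
  simp only [coeff_sum]
  have key : ∀ j ∈ Finset.range n, ∀ k ∈ Finset.range n,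
      coeff (Finsupp.single (0:Fin 3) (n-d) + Finsupp.single 1 (d-1) + Finsupp.single 2 (n-1))
        ((X 2 + X 0)^(n-1-j) * (X 1 : MvPolynomial (Fin 3) ℤ)^j * ((X 1 + X 0)^(n-1-k) * X 2^k))
      = ((if j ≤ d-1 then (n-1-j).choose (n-1-k) * (n-1-k).choose (d-1-j) else 0 : ℕ) : ℤ) := by
    intro j hj k hk
    rw [Finset.mem_range] at hj hk
    have rearr : (X 2 + X 0)^(n-1-j) * (X 1 : MvPolynomial (Fin 3) ℤ)^j *
          ((X 1 + X 0)^(n-1-k) * X 2^k)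
        = ((X 2 + X 0)^(n-1-j) * (X 1 + X 0)^(n-1-k)) *
          monomial (Finsupp.single (1:Fin 3) j + Finsupp.single 2 k) 1 := by
      have e : (monomial (Finsupp.single (1:Fin 3) j + Finsupp.single 2 k) (1:ℤ))
          = X 1 ^ j * X 2 ^ k := by
        rw [X_pow_eq_monomial, X_pow_eq_monomial, monomial_mul, one_mul]
      rw [e]; ring
    rw [rearr, coeff_mul_monomial']
    by_cases hjd : j ≤ d-1
    · rw [if_pos ((fs3_le _ _ _ _ _).2 ⟨hjd, by omega⟩), fs3_sub, coeffA, mul_one]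
      rw [if_pos (by omega), if_pos hjd]
      push_cast
      ring
    · rw [if_neg (fun hle => hjd ((fs3_le _ _ _ _ _).1 hle).1), if_neg hjd, Nat.cast_zero]
  rw [Finset.sum_congr rfl (fun j hj => Finset.sum_congr rfl (key j hj))]
  have := congrArg (Nat.cast : ℕ → ℤ) (natsum n d hd1 hdn)
  push_cast at this ⊢
  rw [this]
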